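/- Suppose f : [0,1]² → ℝ is Lipschitz continuous with f(x,y) > 0 for all (x,y), and λ : [0,1] → ℝ is nonnegative and integrable. If there exists n₀ ∈ ℕ with ρ̄^{n₀} ≥ ρ*, then for every pair of partitions 0 = w_0 < w_1 < ⋯ < w_H = 1 and 0 = v_0 < v_1 < ⋯ < v_M = 1 of [0,1] and every H×M stochastic matrix p, one has max_{m} Σ_{h=1}^H p_{h,m} λ_h / ((v_m − v_{m−1}) μ*_{h,m}) ≥ ρ*, where λ_h = ∫_{w_{h−1}}^{w_h} λ(x) dx and μ*_{h,m} = min of f on [w_{h−1}, w_h] × [v_{m−1}, v_m]. -/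

import Mathlib

open MeasureTheory Set Finset

/-- Integral of the arrival rate function over the `h`-th dyadic subinterval of
`[0,1]` at level `n`: `λ^{(n)}_h = ∫_{h/2ⁿ}^{(h+1)/2ⁿ} λ(x) dx`. -/
noncomputable def lamDyadic (lam : ℝ → ℝ) (n : ℕ) (h : Fin (2 ^ n)) : ℝ :=
  ∫ x in (((h : ℕ) : ℝ) / 2 ^ n)..((((h : ℕ) : ℝ) + 1) / 2 ^ n), lam x

/-- Maximum of `f` on the dyadic square, realized as the `sSup` of the image. -/
noncomputable def muHatDyadic (f : ℝ × ℝ → ℝ) (n : ℕ) (h m : Fin (2 ^ n)) : ℝ :=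
  sSup (f '' (Icc (((h : ℕ) : ℝ) / 2 ^ n) ((((h : ℕ) : ℝ) + 1) / 2 ^ n) ×ˢ
              Icc (((m : ℕ) : ℝ) / 2 ^ n) ((((m : ℕ) : ℝ) + 1) / 2 ^ n)))

/-- A matrix with entries in `[0,1]` and unit row sums. -/
def IsStochastic {H M : ℕ} (p : Fin H → Fin M → ℝ) : Prop :=
  (∀ h m, 0 ≤ p h m ∧ p h m ≤ 1) ∧ ∀ h, ∑ m, p h m = 1

/-- `ρ̄ⁿ`: infimum over `2ⁿ×2ⁿ` stochastic matrices of the worst-case load with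
maximal (best-case) service rates. -/
noncomputable def rhoBar (f : ℝ × ℝ → ℝ) (lam : ℝ → ℝ) (n : ℕ) : ℝ :=
  sInf { r : ℝ | ∃ p : Fin (2 ^ n) → Fin (2 ^ n) → ℝ, IsStochastic p ∧
    r = ⨆ m : Fin (2 ^ n), ∑ h : Fin (2 ^ n),
      (2 ^ n : ℝ) * lamDyadic lam n h * p h m / muHatDyadic f n h m }

private lemma clampInt (lam : ℝ → ℝ) {a b x y : ℝ} (hab : a ≤ b) (hxy : x ≤ y) :
    (∫ t in (min b (max a x))..(min b (max a y)), lam t)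
      = ∫ t in (min y (max x a))..(min y (max x b)), lam t := by
  rcases le_or_gt (max a x) (min b y) with h | h
  · have hxb : x ≤ b := le_trans (le_max_right a x) (h.trans (min_le_left _ _))
    have hay : a ≤ y := le_trans (le_max_left a x) (h.trans (min_le_right _ _))
    have e1 : min b (max a x) = max a x := min_eq_right (h.trans (min_le_left _ _))
    have e2 : min b (max a y) = min b y := by rw [max_eq_right hay]
    have e3 : min y (max x a) = max a x := by
      rw [max_comm]; exact min_eq_right (h.trans (min_le_right _ _))
    have e4 : min y (max x b) = min b y := by rw [max_eq_right hxb, min_comm]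
    rw [e1, e2, e3, e4]
  · rcases lt_max_iff.mp h with h' | h'
    · have hya : y < a := by
        rcases min_lt_iff.mp h' with h'' | h''
        · linarith
        · exact h''
      have hxa : x < a := lt_of_le_of_lt hxy hya
      have e1 : max a x = a := max_eq_left hxa.le
      have e2 : max a y = a := max_eq_left hya.le
      have e3 : min y (max x a) = y := min_eq_left (le_max_of_le_right hya.le)
      have e4 : min y (max x b) = y := min_eq_left (le_max_of_le_right (hya.le.trans hab))
      rw [e1, e2, e3, e4, intervalIntegral.integral_same, intervalIntegral.integral_same]
    · have hbx : b < x := by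
        rcases min_lt_iff.mp h' with h'' | h''
        · exact h''
        · linarith
      have e1 : min b (max a x) = b := min_eq_left (le_max_of_le_right hbx.le)
      have e2 : min b (max a y) = b := min_eq_left (le_max_of_le_right (hbx.le.trans hxy))
      have e3 : max x a = x := max_eq_left ((hab.trans hbx.le))
      have e4 : max x b = x := max_eq_left hbx.le
      rw [e1, e2, e3, e4, min_eq_right hxy, intervalIntegral.integral_same,
        intervalIntegral.integral_same]

private lemma clampDiff {a b x y : ℝ} (hab : a ≤ b) (hxy : x ≤ y) :
    min b (max a y) - min b (max a x) = min y (max x b) - min y (max x a) := by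
  have h := clampInt (fun _ => (1:ℝ)) hab hxy
  simpa using h

private lemma fin_sum_tel {n : ℕ} (g : Fin (n+1) → ℝ) :
    ∑ i : Fin n, (g i.succ - g i.castSucc) = g (Fin.last n) - g 0 := by
  set G : ℕ → ℝ := fun j => g ⟨min j n, Nat.lt_succ_of_le (min_le_right _ _)⟩ with hG
  have key : ∀ i : Fin n, g i.succ - g i.castSucc = G ((i:ℕ)+1) - G (i:ℕ) := by
    intro i
    have h1 : G ((i:ℕ)+1) = g i.succ := by
      simp only [hG]; congr 1; exact Fin.ext (by simp [Nat.min_eq_left (Nat.succ_le_of_lt i.isLt)])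
    have h2 : G (i:ℕ) = g i.castSucc := by
      simp only [hG]; congr 1; exact Fin.ext (by simp [Nat.min_eq_left (le_of_lt i.isLt)])
    rw [h1, h2]
  rw [Finset.sum_congr rfl (fun i _ => key i),
    Fin.sum_univ_eq_sum_range (fun i => G (i+1) - G i) n, Finset.sum_range_sub]
  have hgn : G n = g (Fin.last n) := by simp only [hG]; congr 1; exact Fin.ext (by simp)
  have hg0 : G 0 = g 0 := by simp only [hG]; congr 1
  rw [hgn, hg0]

private lemma fin_int_tel {n : ℕ} (g : Fin (n+1) → ℝ) (lam : ℝ → ℝ)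
    (hi : ∀ i : Fin n, IntervalIntegrable lam volume (g i.castSucc) (g i.succ)) :
    ∑ i : Fin n, ∫ x in (g i.castSucc)..(g i.succ), lam x
      = ∫ x in (g 0)..(g (Fin.last n)), lam x := by
  set G : ℕ → ℝ := fun j => g ⟨min j n, Nat.lt_succ_of_le (min_le_right _ _)⟩ with hG
  have hfin : ∀ i : Fin n, (⟨min ((i:ℕ)+1) n, Nat.lt_succ_of_le (min_le_right _ _)⟩ : Fin (n+1)) = i.succ ∧
      (⟨min (i:ℕ) n, Nat.lt_succ_of_le (min_le_right _ _)⟩ : Fin (n+1)) = i.castSucc := by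
    intro i
    constructor
    · exact Fin.ext (by simp [Nat.min_eq_left (Nat.succ_le_of_lt i.isLt)])
    · exact Fin.ext (by simp [Nat.min_eq_left (le_of_lt i.isLt)])
  have key : ∀ i : Fin n, (∫ x in (g i.castSucc)..(g i.succ), lam x)
      = ∫ x in (G (i:ℕ))..(G ((i:ℕ)+1)), lam x := by
    intro i
    simp only [hG, (hfin i).1, (hfin i).2]
  rw [Finset.sum_congr rfl (fun i _ => key i),
    Fin.sum_univ_eq_sum_range (fun i => ∫ x in (G i)..(G (i+1)), lam x) n,
    intervalIntegral.sum_integral_adjacent_intervals]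
  · have hgn : G n = g (Fin.last n) := by simp only [hG]; congr 1; exact Fin.ext (by simp)
    have hg0 : G 0 = g 0 := by simp only [hG]; congr 1
    rw [hgn, hg0]
  · intro k hk
    have e1 : G k = g (Fin.castSucc ⟨k, hk⟩) := congrArg g (hfin ⟨k,hk⟩).2
    have e2 : G (k+1) = g (Fin.succ ⟨k, hk⟩) := congrArg g (hfin ⟨k,hk⟩).1
    rw [e1, e2]; exact hi ⟨k, hk⟩

/-- Proposition C.1 (ii): if `ρ̄^{n₀} ≥ ρ*` for some dyadic level
`n₀`, then for every pair of partitions `(w,v)` of `[0,1]` and every stochastic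
matrix `p`, the maximal load per server is at least `ρ*`. -/
theorem stmt14 (f : ℝ × ℝ → ℝ)
    (hfLip : ∃ K : NNReal, LipschitzOnWith K f (Icc (0:ℝ) 1 ×ˢ Icc (0:ℝ) 1))
    (hfpos : ∀ z ∈ Icc (0:ℝ) 1 ×ˢ Icc (0:ℝ) 1, 0 < f z)
    (lam : ℝ → ℝ) (hlam : ∀ x ∈ Icc (0:ℝ) 1, 0 ≤ lam x)
    (hint : IntegrableOn lam (Icc 0 1))
    (rstar : ℝ) (hbar : ∃ n₀ : ℕ, rstar ≤ rhoBar f lam n₀) :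
    ∀ (H M : ℕ), 0 < H → 0 < M →
    ∀ (w : Fin (H + 1) → ℝ), w 0 = 0 → w (Fin.last H) = 1 → StrictMono w →
    ∀ (v : Fin (M + 1) → ℝ), v 0 = 0 → v (Fin.last M) = 1 → StrictMono v →
    ∀ (p : Fin H → Fin M → ℝ), IsStochastic p →
      rstar ≤ ⨆ m : Fin M, ∑ h : Fin H,
        p h m * (∫ x in (w h.castSucc)..(w h.succ), lam x) /
          ((v m.succ - v m.castSucc) *
            sInf (f '' (Icc (w h.castSucc) (w h.succ) ×ˢ
                        Icc (v m.castSucc) (v m.succ)))) := by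
  obtain ⟨K, hK⟩ := hfLip
  obtain ⟨n, hn⟩ := hbar
  intro H M hH hM w hw0 hwl hwmono v hv0 hvl hvmono p hp
  have hNpos : 0 < 2 ^ n := Nat.two_pow_pos n
  have h2pos : (0:ℝ) < 2 ^ n := by positivity
  haveI hMne : Nonempty (Fin M) := ⟨⟨0, hM⟩⟩
  haveI hNne : Nonempty (Fin (2^n)) := ⟨⟨0, hNpos⟩⟩
  have hw01 : ∀ h : Fin (H+1), w h ∈ Icc (0:ℝ) 1 := fun h =>
    ⟨hw0 ▸ hwmono.monotone (Fin.zero_le h), hwl ▸ hwmono.monotone (Fin.le_last h)⟩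
  have hv01 : ∀ m : Fin (M+1), v m ∈ Icc (0:ℝ) 1 := fun m =>
    ⟨hv0 ▸ hvmono.monotone (Fin.zero_le m), hvl ▸ hvmono.monotone (Fin.le_last m)⟩
  set A : ℕ → ℝ := fun i => (i : ℝ) / 2 ^ n with hA
  have hAmono : Monotone A := fun i j hij => by
    simp only [hA]; gcongr
  have hA01 : ∀ i : ℕ, i ≤ 2^n → A i ∈ Icc (0:ℝ) 1 := by
    intro i hi
    constructor
    · simp only [hA]; positivity
    · simp only [hA]; rw [div_le_one h2pos]; exact_mod_cast hi
  have hstep : ∀ i : ℕ, A i ≤ A (i+1) := fun i => hAmono (Nat.le_succ i)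
  set cw : Fin (2^n) → Fin (H+1) → ℝ :=
    fun hd h => min (A ((hd:ℕ)+1)) (max (A (hd:ℕ)) (w h)) with hcw
  set cv : Fin (2^n) → Fin (M+1) → ℝ :=
    fun md m => min (A ((md:ℕ)+1)) (max (A (md:ℕ)) (v m)) with hcv
  have clamp_mem : ∀ (i : ℕ) (x : ℝ),
      min (A (i+1)) (max (A i) x) ∈ Icc (A i) (A (i+1)) :=
    fun i x => ⟨le_min (hstep i) (le_max_left _ _), min_le_left _ _⟩
  have hcw_mem : ∀ (hd : Fin (2^n)) (h : Fin (H+1)), cw hd h ∈ Icc (A (hd:ℕ)) (A ((hd:ℕ)+1)) := fun hd h => by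
    simp only [hcw]; exact clamp_mem _ _
  have hcv_mem : ∀ (md : Fin (2^n)) (m : Fin (M+1)), cv md m ∈ Icc (A (md:ℕ)) (A ((md:ℕ)+1)) := fun md m => by
    simp only [hcv]; exact clamp_mem _ _
  have hcw01 : ∀ (hd : Fin (2^n)) (h : Fin (H+1)), cw hd h ∈ Icc (0:ℝ) 1 := fun hd h =>
    ⟨(hA01 (hd:ℕ) hd.isLt.le).1.trans (hcw_mem hd h).1,
     (hcw_mem hd h).2.trans (hA01 ((hd:ℕ)+1) hd.isLt).2⟩
  have hcv01 : ∀ (md : Fin (2^n)) (m : Fin (M+1)), cv md m ∈ Icc (0:ℝ) 1 := fun md m =>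
    ⟨(hA01 (md:ℕ) md.isLt.le).1.trans (hcv_mem md m).1,
     (hcv_mem md m).2.trans (hA01 ((md:ℕ)+1) md.isLt).2⟩
  have hcw_mono : ∀ hd, Monotone (cw hd) := fun hd x y hxy => by
    simp only [hcw]; exact min_le_min le_rfl (max_le_max le_rfl (hwmono.monotone hxy))
  have hcv_mono : ∀ md, Monotone (cv md) := fun md x y hxy => by
    simp only [hcv]; exact min_le_min le_rfl (max_le_max le_rfl (hvmono.monotone hxy))
  have hII : ∀ x y : ℝ, x ∈ Icc (0:ℝ) 1 → y ∈ Icc (0:ℝ) 1 →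
      IntervalIntegrable lam volume x y := fun x y hx hy =>
    (hint.mono_set (uIcc_subset_Icc hx hy)).intervalIntegrable
  set piece : Fin (2^n) → Fin H → ℝ :=
    fun hd h => ∫ x in (cw hd h.castSucc)..(cw hd h.succ), lam x with hpiece
  set lenv : Fin (2^n) → Fin M → ℝ :=
    fun md m => cv md m.succ - cv md m.castSucc with hlenv
  have piece_nonneg : ∀ (hd : Fin (2^n)) (h : Fin H), 0 ≤ piece hd h := fun hd h => by
    simp only [hpiece]
    exact intervalIntegral.integral_nonneg (hcw_mono hd (show h.castSucc < h.succ from Fin.castSucc_lt_succ).le)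
      (fun u hu => hlam u ⟨(hcw01 hd h.castSucc).1.trans hu.1, hu.2.trans (hcw01 hd h.succ).2⟩)
  have lenv_nonneg : ∀ (md : Fin (2^n)) (m : Fin M), 0 ≤ lenv md m := fun md m => by
    simp only [hlenv]; exact sub_nonneg.2 (hcv_mono md (show m.castSucc < m.succ from Fin.castSucc_lt_succ).le)
  have hAe : ∀ i : ℕ, A (i+1) = ((i:ℝ)+1)/2^n := by
    intro i; simp only [hA]; push_cast; ring
  -- T1 : sum over partition cells of pieces of one dyadic interval
  have sum_piece : ∀ hd : Fin (2^n), ∑ h, piece hd h = lamDyadic lam n hd := by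
    intro hd
    have tel := fin_int_tel (cw hd) lam (fun h => hII _ _ (hcw01 hd _) (hcw01 hd _))
    have e0 : cw hd 0 = A (hd:ℕ) := by
      simp only [hcw]; rw [hw0, max_eq_left (hA01 (hd:ℕ) hd.isLt.le).1,
        min_eq_right (hstep (hd:ℕ))]
    have eL : cw hd (Fin.last H) = A ((hd:ℕ)+1) := by
      simp only [hcw]; rw [hwl, max_eq_right (hA01 (hd:ℕ) hd.isLt.le).2,
        min_eq_left (hA01 ((hd:ℕ)+1) hd.isLt).2]
    have hAc : A (hd:ℕ) = ((hd:ℕ):ℝ)/2^n := by simp only [hA]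
    simp only [hpiece]
    rw [tel, e0, eL, hAc, hAe]
    rfl
  have lamD_nonneg : ∀ hd : Fin (2^n), 0 ≤ lamDyadic lam n hd := fun hd => by
    rw [← sum_piece hd]; exact Finset.sum_nonneg fun h _ => piece_nonneg hd h
  -- T2 : sum over dyadic cells of lengths in one partition interval
  have dV_pos : ∀ m : Fin M, 0 < v m.succ - v m.castSucc := fun m =>
    sub_pos.2 (hvmono (show m.castSucc < m.succ from Fin.castSucc_lt_succ))
  have sum_lenv_md : ∀ m : Fin M, ∑ md, lenv md m = v m.succ - v m.castSucc := by
    intro m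
    set e : ℕ → ℝ := fun i => min (v m.succ) (max (v m.castSucc) (A i)) with he
    have hkey : ∀ md : Fin (2^n), lenv md m = e ((md:ℕ)+1) - e (md:ℕ) := fun md => by
      simp only [hlenv, hcv, he]
      exact clampDiff (hstep (md:ℕ)) (hvmono.monotone (show m.castSucc < m.succ from Fin.castSucc_lt_succ).le)
    rw [Finset.sum_congr rfl (fun md _ => hkey md),
      Fin.sum_univ_eq_sum_range (fun i => e (i+1) - e i) (2^n), Finset.sum_range_sub]
    have hA0 : A 0 = 0 := by simp only [hA]; norm_num
    have hAN : A (2^n) = 1 := by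
      simp only [hA]; rw [div_eq_one_iff_eq h2pos.ne']; push_cast; ring
    have e0 : e 0 = v m.castSucc := by
      simp only [he]; rw [hA0, max_eq_left (hv01 m.castSucc).1,
        min_eq_right (hvmono.monotone (show m.castSucc < m.succ from Fin.castSucc_lt_succ).le)]
    have eN : e (2^n) = v m.succ := by
      simp only [he]; rw [hAN, max_eq_right (hv01 m.castSucc).2,
        min_eq_left (hv01 m.succ).2]
    rw [e0, eN]
  -- T3 : sum over dyadic cells of pieces in one partition interval
  have sum_piece_h : ∀ h : Fin H, ∑ hd, piece hd h
      = ∫ x in (w h.castSucc)..(w h.succ), lam x := by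
    intro h
    set e : ℕ → ℝ := fun i => min (w h.succ) (max (w h.castSucc) (A i)) with he
    have hemem : ∀ i : ℕ, e i ∈ Icc (0:ℝ) 1 := fun i =>
      ⟨(hw01 h.castSucc).1.trans (le_min (hwmono.monotone (show h.castSucc < h.succ from Fin.castSucc_lt_succ).le)
          (le_max_left _ _)), (min_le_left _ _).trans (hw01 h.succ).2⟩
    have hkey : ∀ hd : Fin (2^n), piece hd h = ∫ x in e (hd:ℕ)..e ((hd:ℕ)+1), lam x := fun hd => by
      simp only [hpiece, hcw, he]
      exact clampInt lam (hstep (hd:ℕ)) (hwmono.monotone (show h.castSucc < h.succ from Fin.castSucc_lt_succ).le)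
    rw [Finset.sum_congr rfl (fun hd _ => hkey hd),
      Fin.sum_univ_eq_sum_range (fun i => ∫ x in e i..e (i+1), lam x) (2^n),
      intervalIntegral.sum_integral_adjacent_intervals
        (fun k _ => hII _ _ (hemem k) (hemem (k+1)))]
    have hA0 : A 0 = 0 := by simp only [hA]; norm_num
    have hAN : A (2^n) = 1 := by
      simp only [hA]; rw [div_eq_one_iff_eq h2pos.ne']; push_cast; ring
    have e0 : e 0 = w h.castSucc := by
      simp only [he]; rw [hA0, max_eq_left (hw01 h.castSucc).1,
        min_eq_right (hwmono.monotone (show h.castSucc < h.succ from Fin.castSucc_lt_succ).le)]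
    have eN : e (2^n) = w h.succ := by
      simp only [he]; rw [hAN, max_eq_right (hw01 h.castSucc).2,
        min_eq_left (hw01 h.succ).2]
    rw [e0, eN]
  -- T4 : sum over partition cells of lengths in one dyadic interval
  have sum_lenv_m : ∀ md : Fin (2^n), ∑ m, lenv md m = A ((md:ℕ)+1) - A (md:ℕ) := by
    intro md
    have tel := fin_sum_tel (cv md)
    have e0 : cv md 0 = A (md:ℕ) := by
      simp only [hcv]; rw [hv0, max_eq_left (hA01 (md:ℕ) md.isLt.le).1,
        min_eq_right (hstep (md:ℕ))]
    have eL : cv md (Fin.last M) = A ((md:ℕ)+1) := by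
      simp only [hcv]; rw [hvl, max_eq_right (hA01 (md:ℕ) md.isLt.le).2,
        min_eq_left (hA01 ((md:ℕ)+1) md.isLt).2]
    simp only [hlenv]
    rw [tel, e0, eL]
  -- continuity and compactness facts
  have hfc : ContinuousOn f (Icc (0:ℝ) 1 ×ˢ Icc (0:ℝ) 1) := hK.continuousOn
  have rect_facts : ∀ x1 x2 y1 y2 : ℝ, x1 ∈ Icc (0:ℝ) 1 → x2 ∈ Icc (0:ℝ) 1 →
      y1 ∈ Icc (0:ℝ) 1 → y2 ∈ Icc (0:ℝ) 1 → x1 ≤ x2 → y1 ≤ y2 →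
      (0 < sInf (f '' (Icc x1 x2 ×ˢ Icc y1 y2)) ∧
        (∀ z ∈ Icc x1 x2 ×ˢ Icc y1 y2, sInf (f '' (Icc x1 x2 ×ˢ Icc y1 y2)) ≤ f z) ∧
        (∀ z ∈ Icc x1 x2 ×ˢ Icc y1 y2, f z ≤ sSup (f '' (Icc x1 x2 ×ˢ Icc y1 y2)))) := by
    intro x1 x2 y1 y2 hx1 hx2 hy1 hy2 hxx hyy
    have hsub : Icc x1 x2 ×ˢ Icc y1 y2 ⊆ Icc (0:ℝ) 1 ×ˢ Icc (0:ℝ) 1 :=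
      Set.prod_mono (Icc_subset_Icc hx1.1 hx2.2) (Icc_subset_Icc hy1.1 hy2.2)
    have hcomp : IsCompact (Icc x1 x2 ×ˢ Icc y1 y2) := isCompact_Icc.prod isCompact_Icc
    have hne : (Icc x1 x2 ×ˢ Icc y1 y2).Nonempty :=
      (Set.nonempty_Icc.2 hxx).prod (Set.nonempty_Icc.2 hyy)
    have himg : IsCompact (f '' (Icc x1 x2 ×ˢ Icc y1 y2)) :=
      hcomp.image_of_continuousOn (hfc.mono hsub)
    refine ⟨?_, fun z hz => csInf_le himg.bddBelow (Set.mem_image_of_mem f hz),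
      fun z hz => le_csSup himg.bddAbove (Set.mem_image_of_mem f hz)⟩
    obtain ⟨z, hz, hz2⟩ := himg.sInf_mem (hne.image f)
    rw [← hz2]
    exact hfpos z (hsub hz)
  set mus : Fin H → Fin M → ℝ := fun h m =>
    sInf (f '' (Icc (w h.castSucc) (w h.succ) ×ˢ Icc (v m.castSucc) (v m.succ))) with hmus
  have mus_facts : ∀ (h : Fin H) (m : Fin M), 0 < mus h m ∧
      ∀ z ∈ Icc (w h.castSucc) (w h.succ) ×ˢ Icc (v m.castSucc) (v m.succ), mus h m ≤ f z := by
    intro h m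
    have := rect_facts (w h.castSucc) (w h.succ) (v m.castSucc) (v m.succ)
      (hw01 _) (hw01 _) (hv01 _) (hv01 _)
      (hwmono.monotone (show h.castSucc < h.succ from Fin.castSucc_lt_succ).le) (hvmono.monotone (show m.castSucc < m.succ from Fin.castSucc_lt_succ).le)
    exact ⟨by simp only [hmus]; exact this.1, by simp only [hmus]; exact this.2.1⟩
  have hsq : ∀ hd md : Fin (2^n), muHatDyadic f n hd md
      = sSup (f '' (Icc (A (hd:ℕ)) (A ((hd:ℕ)+1)) ×ˢ Icc (A (md:ℕ)) (A ((md:ℕ)+1)))) := by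
    intro hd md
    have h1 : A ((hd:ℕ)) = ((hd:ℕ):ℝ)/2^n := by simp only [hA]
    have h2 : A ((md:ℕ)) = ((md:ℕ):ℝ)/2^n := by simp only [hA]
    rw [h1, h2, hAe, hAe]
    rfl
  have muHat_facts : ∀ hd md : Fin (2^n), 0 < muHatDyadic f n hd md ∧
      ∀ z ∈ Icc (A (hd:ℕ)) (A ((hd:ℕ)+1)) ×ˢ Icc (A (md:ℕ)) (A ((md:ℕ)+1)),
        f z ≤ muHatDyadic f n hd md := by
    intro hd md
    have hx1 := hA01 (hd:ℕ) hd.isLt.le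
    have hx2 := hA01 ((hd:ℕ)+1) hd.isLt
    have hy1 := hA01 (md:ℕ) md.isLt.le
    have hy2 := hA01 ((md:ℕ)+1) md.isLt
    have hsub : Icc (A (hd:ℕ)) (A ((hd:ℕ)+1)) ×ˢ Icc (A (md:ℕ)) (A ((md:ℕ)+1))
        ⊆ Icc (0:ℝ) 1 ×ˢ Icc (0:ℝ) 1 :=
      Set.prod_mono (Icc_subset_Icc hx1.1 hx2.2) (Icc_subset_Icc hy1.1 hy2.2)
    have hcomp : IsCompact (Icc (A (hd:ℕ)) (A ((hd:ℕ)+1)) ×ˢ Icc (A (md:ℕ)) (A ((md:ℕ)+1))) :=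
      isCompact_Icc.prod isCompact_Icc
    have hne : (Icc (A (hd:ℕ)) (A ((hd:ℕ)+1)) ×ˢ Icc (A (md:ℕ)) (A ((md:ℕ)+1))).Nonempty :=
      (Set.nonempty_Icc.2 (hstep _)).prod (Set.nonempty_Icc.2 (hstep _))
    have himg : IsCompact (f '' (Icc (A (hd:ℕ)) (A ((hd:ℕ)+1)) ×ˢ Icc (A (md:ℕ)) (A ((md:ℕ)+1)))) :=
      hcomp.image_of_continuousOn (hfc.mono hsub)
    rw [hsq hd md]
    constructor
    · obtain ⟨z, hz, hz2⟩ := himg.sSup_mem (hne.image f)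
      rw [← hz2]
      exact hfpos z (hsub hz)
    · exact fun z hz => le_csSup himg.bddAbove (Set.mem_image_of_mem f hz)
  -- the key geometric comparison
  have inmem : ∀ a b x y : ℝ, a ≤ b → min b (max a x) < min b (max a y) →
      min b (max a x) ∈ Icc x y := by
    intro a b x y hab hlt
    constructor
    · rcases le_or_gt (max a x) b with h1 | h1
      · rw [min_eq_right h1]; exact le_max_right a x
      · have e : min b (max a x) = b := min_eq_left h1.le
        have h3 : min b (max a y) ≤ b := min_le_left _ _
        rw [e] at hlt
        linarith
    · rcases le_or_gt a y with h2 | h2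
      · have h3 : min b (max a y) ≤ y := by rw [max_eq_right h2]; exact min_le_right _ _
        linarith
    
      · have hbig : min b (max a y) = a := by
          rw [max_eq_left h2.le, min_eq_right hab]
        have hsmall : a ≤ min b (max a x) := le_min hab (le_max_left _ _)
        rw [hbig] at hlt
        linarith
  have key_mu : ∀ (hd md : Fin (2^n)) (h : Fin H) (m : Fin M),
      piece hd h ≠ 0 → lenv md m ≠ 0 → mus h m ≤ muHatDyadic f n hd md := by
    intro hd md h m hpne hlne
    have hcc : cw hd h.castSucc < cw hd h.succ := by
      rcases lt_or_eq_of_le (hcw_mono hd (show h.castSucc < h.succ from Fin.castSucc_lt_succ).le) with h' | h'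
      · exact h'
      · exact absurd (by simp only [hpiece]; rw [h', intervalIntegral.integral_same]) hpne
    have hvv : cv md m.castSucc < cv md m.succ := by
      rcases lt_or_eq_of_le (hcv_mono md (show m.castSucc < m.succ from Fin.castSucc_lt_succ).le) with h' | h'
      · exact h'
      · exact absurd (by simp only [hlenv]; rw [h', sub_self]) hlne
    have hxmem : cw hd h.castSucc ∈ Icc (w h.castSucc) (w h.succ) := by
      have := inmem (A (hd:ℕ)) (A ((hd:ℕ)+1)) (w h.castSucc) (w h.succ) (hstep _)
        (by simp only [hcw] at hcc ⊢; exact hcc)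
      simpa only [hcw] using this
    have hymem : cv md m.castSucc ∈ Icc (v m.castSucc) (v m.succ) := by
      have := inmem (A (md:ℕ)) (A ((md:ℕ)+1)) (v m.castSucc) (v m.succ) (hstep _)
        (by simp only [hcv] at hvv ⊢; exact hvv)
      simpa only [hcv] using this
    calc mus h m ≤ f (cw hd h.castSucc, cv md m.castSucc) :=
          (mus_facts h m).2 _ ⟨hxmem, hymem⟩
      _ ≤ muHatDyadic f n hd md :=
          (muHat_facts hd md).2 _ ⟨hcw_mem hd h.castSucc, hcv_mem md m.castSucc⟩
  -- the stochastic matrix q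
  set q : Fin (2^n) → Fin (2^n) → ℝ := fun hd md =>
    if lamDyadic lam n hd = 0 then (if md = hd then 1 else 0)
    else ∑ h, ∑ m, (piece hd h / lamDyadic lam n hd) * p h m *
      (lenv md m / (v m.succ - v m.castSucc)) with hq
  have q_nonneg : ∀ hd md, 0 ≤ q hd md := by
    intro hd md
    simp only [hq]
    split_ifs with h1 h2
    · exact zero_le_one
    · exact le_rfl
    · refine Finset.sum_nonneg fun h _ => Finset.sum_nonneg fun m _ => ?_
      exact mul_nonneg (mul_nonneg (div_nonneg (piece_nonneg hd h) (lamD_nonneg hd))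
        (hp.1 h m).1) (div_nonneg (lenv_nonneg md m) (dV_pos m).le)
  have q_row : ∀ hd, ∑ md, q hd md = 1 := by
    intro hd
    by_cases hl : lamDyadic lam n hd = 0
    · simp only [hq, hl, if_true, eq_self_iff_true]
      simp
    · simp only [hq, if_neg hl]
      rw [Finset.sum_comm]
      have inner : ∀ h : Fin H, ∑ m, ∑ md : Fin (2^n),
          (piece hd h / lamDyadic lam n hd) * p h m *
            (lenv md m / (v m.succ - v m.castSucc))
          = (piece hd h / lamDyadic lam n hd) := by
        intro h
        have permd : ∀ m : Fin M, ∑ md : Fin (2^n),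
            (piece hd h / lamDyadic lam n hd) * p h m *
              (lenv md m / (v m.succ - v m.castSucc))
            = (piece hd h / lamDyadic lam n hd) * p h m := by
          intro m
          rw [← Finset.mul_sum, ← Finset.sum_div, sum_lenv_md m, div_self (dV_pos m).ne',
            mul_one]
        rw [Finset.sum_congr rfl (fun m _ => permd m), ← Finset.mul_sum, hp.2 h, mul_one]
      have swap : ∀ h : Fin H, ∑ md : Fin (2^n), ∑ m,
          (piece hd h / lamDyadic lam n hd) * p h m *
            (lenv md m / (v m.succ - v m.castSucc))
          = (piece hd h / lamDyadic lam n hd) := by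
        intro h; rw [Finset.sum_comm]; exact inner h
      rw [Finset.sum_congr rfl (fun h _ => swap h), ← Finset.sum_div, sum_piece hd,
        div_self hl]
  have q_le : ∀ hd md, q hd md ≤ 1 := by
    intro hd md
    calc q hd md ≤ ∑ md', q hd md' :=
          Finset.single_le_sum (fun md' _ => q_nonneg hd md') (Finset.mem_univ md)
      _ = 1 := q_row hd
  set Load : Fin M → ℝ := fun m => ∑ h, p h m * (∫ x in (w h.castSucc)..(w h.succ), lam x) /
    ((v m.succ - v m.castSucc) * mus h m) with hLoad
  have load_le_S : ∀ m, Load m ≤ ⨆ m', Load m' := fun m =>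
    le_ciSup (Finite.bddAbove_range Load) m
  -- bound for each dyadic column
  have col_le : ∀ md : Fin (2^n),
      (∑ hd, (2^n : ℝ) * lamDyadic lam n hd * q hd md / muHatDyadic f n hd md)
        ≤ ⨆ m', Load m' := by
    intro md
    have step1 : ∀ hd : Fin (2^n), (2^n : ℝ) * lamDyadic lam n hd * q hd md / muHatDyadic f n hd md
        ≤ ∑ h, ∑ m, piece hd h * ((2^n : ℝ) * p h m *
            (lenv md m / (v m.succ - v m.castSucc)) / mus h m) := by
      intro hd
      have rhs_nonneg : ∀ (h : Fin H) (m : Fin M), 0 ≤ piece hd h * ((2^n : ℝ) * p h m *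
          (lenv md m / (v m.succ - v m.castSucc)) / mus h m) := by
        intro h m
        refine mul_nonneg (piece_nonneg hd h) (div_nonneg ?_ (mus_facts h m).1.le)
        exact mul_nonneg (mul_nonneg h2pos.le (hp.1 h m).1)
          (div_nonneg (lenv_nonneg md m) (dV_pos m).le)
      by_cases hl : lamDyadic lam n hd = 0
      · rw [hl, mul_zero, zero_mul, zero_div]
        exact Finset.sum_nonneg fun h _ => Finset.sum_nonneg fun m _ => rhs_nonneg h m
      · simp only [hq, if_neg hl]
        have expand : (2^n : ℝ) * lamDyadic lam n hd * (∑ h, ∑ m,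
            (piece hd h / lamDyadic lam n hd) * p h m *
              (lenv md m / (v m.succ - v m.castSucc))) / muHatDyadic f n hd md
            = ∑ h, ∑ m, ((2^n : ℝ) * piece hd h * p h m *
                (lenv md m / (v m.succ - v m.castSucc))) / muHatDyadic f n hd md := by
          rw [Finset.mul_sum, Finset.sum_div]
          refine Finset.sum_congr rfl fun h _ => ?_
          rw [Finset.mul_sum, Finset.sum_div]
          refine Finset.sum_congr rfl fun m _ => ?_
          congr 1
          have h1 : piece hd h / lamDyadic lam n hd * p h m *
              (lenv md m / (v m.succ - v m.castSucc))
              = piece hd h * p h m * (lenv md m / (v m.succ - v m.castSucc)) /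
                  lamDyadic lam n hd := by ring
          rw [h1]
          rw [show (2:ℝ)^n * lamDyadic lam n hd * (piece hd h * p h m *
              (lenv md m / (v m.succ - v m.castSucc)) / lamDyadic lam n hd)
              = (2:ℝ)^n * (lamDyadic lam n hd * (piece hd h * p h m *
                (lenv md m / (v m.succ - v m.castSucc))) / lamDyadic lam n hd) from by ring]
          rw [mul_div_cancel_left₀ _ hl]
          ring
        rw [expand]
        refine Finset.sum_le_sum fun h _ => Finset.sum_le_sum fun m _ => ?_
        have hrw : piece hd h * ((2^n : ℝ) * p h m *
            (lenv md m / (v m.succ - v m.castSucc)) / mus h m)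
            = ((2^n : ℝ) * piece hd h * p h m *
                (lenv md m / (v m.succ - v m.castSucc))) / mus h m := by ring
        rw [hrw]
        by_cases hz : (2^n : ℝ) * piece hd h * p h m *
            (lenv md m / (v m.succ - v m.castSucc)) = 0
        · rw [hz, zero_div, zero_div]
        · have hpne : piece hd h ≠ 0 := by
            intro hcontra; apply hz; rw [hcontra]; ring
          have hlne : lenv md m ≠ 0 := by
            intro hcontra; apply hz; rw [hcontra]; simp
          have hnum : 0 ≤ (2^n : ℝ) * piece hd h * p h m *
              (lenv md m / (v m.succ - v m.castSucc)) :=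
            mul_nonneg (mul_nonneg (mul_nonneg h2pos.le (piece_nonneg hd h)) (hp.1 h m).1)
              (div_nonneg (lenv_nonneg md m) (dV_pos m).le)
          exact div_le_div_of_nonneg_left hnum (mus_facts h m).1 (key_mu hd md h m hpne hlne)
    calc ∑ hd, (2^n : ℝ) * lamDyadic lam n hd * q hd md / muHatDyadic f n hd md
        ≤ ∑ hd, ∑ h, ∑ m, piece hd h * ((2^n : ℝ) * p h m *
            (lenv md m / (v m.succ - v m.castSucc)) / mus h m) :=
          Finset.sum_le_sum fun hd _ => step1 hd
      _ = ∑ h, ∑ m, (∫ x in (w h.castSucc)..(w h.succ), lam x) * ((2^n : ℝ) * p h m *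
            (lenv md m / (v m.succ - v m.castSucc)) / mus h m) := by
          rw [Finset.sum_comm]
          refine Finset.sum_congr rfl fun h _ => ?_
          rw [Finset.sum_comm]
          refine Finset.sum_congr rfl fun m _ => ?_
          rw [← Finset.sum_mul, sum_piece_h h]
      _ = ∑ m, (2^n : ℝ) * lenv md m * (∑ h, p h m *
            (∫ x in (w h.castSucc)..(w h.succ), lam x) /
              ((v m.succ - v m.castSucc) * mus h m)) := by
          rw [Finset.sum_comm]
          refine Finset.sum_congr rfl fun m _ => ?_
          rw [Finset.mul_sum]
          refine Finset.sum_congr rfl fun h _ => ?_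
          rw [div_mul_eq_div_div]
          ring
      _ = ∑ m, (2^n : ℝ) * lenv md m * Load m := by
          refine Finset.sum_congr rfl fun m _ => ?_
          rw [hLoad]
      _ ≤ ∑ m, (2^n : ℝ) * lenv md m * (⨆ m', Load m') :=
          Finset.sum_le_sum fun m _ => mul_le_mul_of_nonneg_left (load_le_S m)
            (mul_nonneg h2pos.le (lenv_nonneg md m))
      _ = (2^n : ℝ) * (∑ m, lenv md m) * (⨆ m', Load m') := by
          rw [← Finset.sum_mul, ← Finset.mul_sum]
      _ = ⨆ m', Load m' := by
          rw [sum_lenv_m md]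
          have : (2^n : ℝ) * (A ((md:ℕ)+1) - A (md:ℕ)) = 1 := by
            simp only [hA]
            push_cast
            field_simp
            ring
          rw [this, one_mul]
  -- conclusion
  have hmem : (⨆ md : Fin (2^n), ∑ hd : Fin (2^n),
      (2^n : ℝ) * lamDyadic lam n hd * q hd md / muHatDyadic f n hd md)
      ∈ { r : ℝ | ∃ p' : Fin (2^n) → Fin (2^n) → ℝ, IsStochastic p' ∧
        r = ⨆ m : Fin (2^n), ∑ h : Fin (2^n),
          (2^n : ℝ) * lamDyadic lam n h * p' h m / muHatDyadic f n h m } :=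
    ⟨q, ⟨fun hd md => ⟨q_nonneg hd md, q_le hd md⟩, q_row⟩, rfl⟩
  have hbdd : BddBelow { r : ℝ | ∃ p' : Fin (2^n) → Fin (2^n) → ℝ, IsStochastic p' ∧
      r = ⨆ m : Fin (2^n), ∑ h : Fin (2^n),
        (2^n : ℝ) * lamDyadic lam n h * p' h m / muHatDyadic f n h m } := by
    refine ⟨0, fun r hr => ?_⟩
    obtain ⟨p', hp', rfl⟩ := hr
    have hterm : ∀ md : Fin (2^n), 0 ≤ ∑ hd : Fin (2^n),
        (2^n : ℝ) * lamDyadic lam n hd * p' hd md / muHatDyadic f n hd md := by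
      intro md
      refine Finset.sum_nonneg fun hd _ => div_nonneg ?_ (muHat_facts hd md).1.le
      exact mul_nonneg (mul_nonneg h2pos.le (lamD_nonneg hd)) (hp'.1 hd md).1
    obtain ⟨md⟩ := hNne
    exact le_ciSup_of_le (Finite.bddAbove_range _) md (hterm md)
  have hrho : rhoBar f lam n ≤ ⨆ md : Fin (2^n), ∑ hd : Fin (2^n),
      (2^n : ℝ) * lamDyadic lam n hd * q hd md / muHatDyadic f n hd md := by
    unfold rhoBar
    exact csInf_le hbdd hmem
  have hS : (⨆ md : Fin (2^n), ∑ hd : Fin (2^n),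
      (2^n : ℝ) * lamDyadic lam n hd * q hd md / muHatDyadic f n hd md)
      ≤ ⨆ m', Load m' := ciSup_le col_le
  calc rstar ≤ rhoBar f lam n := hn
    _ ≤ ⨆ md : Fin (2^n), ∑ hd : Fin (2^n),
        (2^n : ℝ) * lamDyadic lam n hd * q hd md / muHatDyadic f n hd md := hrho
    _ ≤ ⨆ m', Load m' := hS
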